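/- Assume c ≥ n (every storage provider can host any number of slices). Let M₁ = Client ∥ ProviderAtt and let M₂ = Client' ∥ ProviderAtt, where Client' is identical to Client except that the per-provider counter variables ctr_c^i are removed and the capacity guards ctr_c^i < c and ctr_c^i ≥ c are dropped (the busy sending transition from pc_c = 1 is always enabled). Let V be the set of all state variables of M₁ except the counters ctr_c^i, i.e. V = {pc_c, s_c, ctr_c, pc_a, ctr_a, att_a^1,…,att_a^m}, and assume the labeling functions L₁ and L₂ are invariant with respect to V and assign equal labels to V-equivalent states across the two systems. Then M₁ ≈ M₂; indeed the relation R on S₁ ⊎ S₂ defined by R(s,s') iff s ≡_V s' is a probabilistic bisimulation witnessing this. -/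

import Mathlib

/-- Total probability of moving from `s` under action `α` into the set of states `X`. -/
noncomputable def prSet {S Act : Type*} (P : S → Act → S → ℝ) (s : S) (α : Act) (X : Set S) : ℝ :=
  ∑' t : X, P s α t.1

/-- `R` is a probabilistic bisimulation w.r.t. the transition probabilities `P` and the
labeling `L`: it is an equivalence relation, related states carry the same label, and
related states move into every `R`-equivalence class with the same probability. -/
structure IsProbBisim {S Act AP : Type*} (P : S → Act → S → ℝ) (L : S → Set AP)
    (R : S → S → Prop) : Prop where
  equiv : Equivalence R
  label_eq : ∀ s s', R s s' → L s = L s'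
  pr_eq : ∀ s s', R s s' → ∀ (α : Act) (t : S),
    prSet P s α {u | R t u} = prSet P s' α {u | R t u}

/-- Transition probabilities of the disjoint-union MDP (componentwise, no cross transitions). -/
def unionPr {S₁ S₂ Act : Type*} (P₁ : S₁ → Act → S₁ → ℝ) (P₂ : S₂ → Act → S₂ → ℝ) :
    S₁ ⊕ S₂ → Act → S₁ ⊕ S₂ → ℝ
  | Sum.inl s, α, Sum.inl t => P₁ s α t
  | Sum.inr s, α, Sum.inr t => P₂ s α t
  | _, _, _ => 0

/-- Labeling of the disjoint-union MDP. -/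
def unionL {S₁ S₂ AP : Type*} (L₁ : S₁ → Set AP) (L₂ : S₂ → Set AP) : S₁ ⊕ S₂ → Set AP
  | Sum.inl s => L₁ s
  | Sum.inr s => L₂ s

/-- Two MDPs (given by transition probabilities, initial distributions and labelings) are
bisimilar (`M₁ ≈ M₂`) iff some probabilistic bisimulation on the disjoint-union MDP relates
them so that every equivalence class gets the same initial weight from both sides. -/
noncomputable def Bisimilar {S₁ S₂ Act AP : Type*}
    (P₁ : S₁ → Act → S₁ → ℝ) (ι₁ : S₁ → ℝ) (L₁ : S₁ → Set AP)
    (P₂ : S₂ → Act → S₂ → ℝ) (ι₂ : S₂ → ℝ) (L₂ : S₂ → Set AP) : Prop :=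
  ∃ R : S₁ ⊕ S₂ → S₁ ⊕ S₂ → Prop,
    IsProbBisim (unionPr P₁ P₂) (unionL L₁ L₂) R ∧
    ∀ t : S₁ ⊕ S₂,
      (∑' s : {s : S₁ // R (Sum.inl s) t}, ι₁ s.1) =
      (∑' s : {s : S₂ // R (Sum.inr s) t}, ι₂ s.1)

attribute [local instance] Classical.propDecidable

/-- Actions of the composed systems `Client ∥ ProviderAtt` and `Client' ∥ ProviderAtt`:
the synchronized `busy` action, an internal client action and an internal attacker action. -/
inductive PAct : Type
  | busy : PAct
  | ctau : PAct
  | atau : PAct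

/-- A state of `Client ∥ ProviderAtt` with `m` providers and `n` slices: `pcc`, `sc`,
`ctrc`, and the per-provider counters `sctr` are the client variables (`sc = none` encodes
`s_c = 0`), while `pca ∈ {0,…,m,done}` (`done` encoded as `m+1`), the flags `att` and `ctra`
are the attacker variables. -/
structure PS1 (m n : ℕ) where
  pcc : Fin 3
  sc : Option (Fin m)
  ctrc : Fin (n + 1)
  sctr : Fin m → Fin (n + 1)
  pca : Fin (m + 2)
  att : Fin m → Bool
  ctra : Fin (n + 1)

/-- A state of `Client' ∥ ProviderAtt`: as `PS1`, but the per-provider counter variables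
`ctr_c^i` are removed. -/
structure PS2 (m n : ℕ) where
  pcc : Fin 3
  sc : Option (Fin m)
  ctrc : Fin (n + 1)
  pca : Fin (m + 2)
  att : Fin m → Bool
  ctra : Fin (n + 1)

/-- Increment of a bounded counter (saturating at `n`; all increments performed by the
model happen strictly below `n`). -/
def finInc {n : ℕ} (x : Fin (n + 1)) : Fin (n + 1) := ⟨min (x.1 + 1) n, by omega⟩

/-- Increment of the attacker's program counter (saturating at `m+1`, the `done` value). -/
def pcaInc {m : ℕ} (x : Fin (m + 2)) : Fin (m + 2) := ⟨min (x.1 + 1) (m + 1), by omega⟩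

/-- Joint `busy` step of `M₁`: the slice is sent to provider `i`; the attacker stores it
iff provider `i` has been successfully attacked. -/
def busyT1 {m n : ℕ} (s : PS1 m n) (i : Fin m) : PS1 m n :=
  { s with pcc := 0, sc := none, ctrc := finInc s.ctrc,
           sctr := Function.update s.sctr i (finInc (s.sctr i)),
           ctra := if s.att i then finInc s.ctra else s.ctra }

/-- Joint `busy` step of `M₂` (no per-provider counters). -/
def busyT2 {m n : ℕ} (s : PS2 m n) (i : Fin m) : PS2 m n :=
  { s with pcc := 0, sc := none, ctrc := finInc s.ctrc,
           ctra := if s.att i then finInc s.ctra else s.ctra }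

/-- Transition probabilities of `M₁ = Client ∥ ProviderAtt` (capacity `c`, threshold `k₁`,
provider-picking probabilities `p`, attack probabilities `a`, reconstruction
probabilities `x`). -/
noncomputable def provPr1 {m n : ℕ} (c k₁ : ℕ) (p a : Fin m → ℝ) (x : ℕ → ℝ)
    (s : PS1 m n) (α : PAct) (t : PS1 m n) : ℝ :=
  match α with
  | PAct.ctau =>
      (match t.sc with
        | some i =>
            if s.pcc = 0 ∧ (s.ctrc : ℕ) < n ∧ t = { s with pcc := 1, sc := some i } then
              p i
            else 0
        | none => 0)
      + (if (∃ i, s.sc = some i ∧ c ≤ (s.sctr i : ℕ)) ∧ s.pcc = 1 ∧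
            t = { s with pcc := 0, sc := none } then 1 else 0)
      + (if s.pcc = 0 ∧ (s.ctrc : ℕ) = n ∧ t = { s with pcc := 2 } then 1 else 0)
  | PAct.atau =>
      (if h : (s.pca : ℕ) < m then
        (if t = { s with pca := pcaInc s.pca, att := Function.update s.att ⟨s.pca, h⟩ true }
         then a ⟨s.pca, h⟩ else 0)
        + (if t = { s with pca := pcaInc s.pca } then 1 - a ⟨s.pca, h⟩ else 0)
       else 0)
      + (if (s.pca : ℕ) = m ∧ k₁ ≤ (s.ctra : ℕ) then
          (if t = { s with pca := Fin.last (m + 1) } then x (s.ctra : ℕ) else 0)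
          + (if t = s then 1 - x (s.ctra : ℕ) else 0)
         else 0)
  | PAct.busy =>
      match s.sc with
      | some i =>
          if s.pcc = 1 ∧ (s.sctr i : ℕ) < c ∧ (s.pca : ℕ) = m then
            if t = busyT1 s i then 1 else 0
          else 0
      | none => 0

/-- Transition probabilities of `M₂ = Client' ∥ ProviderAtt`: as `provPr1`, but the counters
`ctr_c^i` are removed and the capacity guards `ctr_c^i < c` / `ctr_c^i ≥ c` are dropped
(the `busy` sending transition from `pc_c = 1` is always enabled, the retry transition
disappears). -/
noncomputable def provPr2 {m n : ℕ} (k₁ : ℕ) (p a : Fin m → ℝ) (x : ℕ → ℝ)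
    (s : PS2 m n) (α : PAct) (t : PS2 m n) : ℝ :=
  match α with
  | PAct.ctau =>
      (match t.sc with
        | some i =>
            if s.pcc = 0 ∧ (s.ctrc : ℕ) < n ∧ t = { s with pcc := 1, sc := some i } then
              p i
            else 0
        | none => 0)
      + (if s.pcc = 0 ∧ (s.ctrc : ℕ) = n ∧ t = { s with pcc := 2 } then 1 else 0)
  | PAct.atau =>
      (if h : (s.pca : ℕ) < m then
        (if t = { s with pca := pcaInc s.pca, att := Function.update s.att ⟨s.pca, h⟩ true }
         then a ⟨s.pca, h⟩ else 0)
        + (if t = { s with pca := pcaInc s.pca } then 1 - a ⟨s.pca, h⟩ else 0)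
       else 0)
      + (if (s.pca : ℕ) = m ∧ k₁ ≤ (s.ctra : ℕ) then
          (if t = { s with pca := Fin.last (m + 1) } then x (s.ctra : ℕ) else 0)
          + (if t = s then 1 - x (s.ctra : ℕ) else 0)
         else 0)
  | PAct.busy =>
      match s.sc with
      | some i =>
          if s.pcc = 1 ∧ (s.pca : ℕ) = m then
            if t = busyT2 s i then 1 else 0
          else 0
      | none => 0

/-- The values of the variables `V = {pc_c, s_c, ctr_c, pc_a, att_a^1,…,att_a^m, ctr_a}`
(all variables except the counters `ctr_c^i`) in a state of `M₁`. -/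
def proj1 {m n : ℕ} (s : PS1 m n) :
    Fin 3 × Option (Fin m) × Fin (n + 1) × Fin (m + 2) × (Fin m → Bool) × Fin (n + 1) :=
  (s.pcc, s.sc, s.ctrc, s.pca, s.att, s.ctra)

/-- The values of the variables in `V` in a state of `M₂`. -/
def proj2 {m n : ℕ} (s : PS2 m n) :
    Fin 3 × Option (Fin m) × Fin (n + 1) × Fin (m + 2) × (Fin m → Bool) × Fin (n + 1) :=
  (s.pcc, s.sc, s.ctrc, s.pca, s.att, s.ctra)

/-- The values of the variables in `V` in a state of the disjoint union. -/
def projU {m n : ℕ} : PS1 m n ⊕ PS2 m n →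
    Fin 3 × Option (Fin m) × Fin (n + 1) × Fin (m + 2) × (Fin m → Bool) × Fin (n + 1) :=
  Sum.elim proj1 proj2

/-- Initial state of `M₁`: everything is `0` (all attack flags unset). -/
def initP1 {m n : ℕ} : PS1 m n := ⟨0, none, 0, fun _ => 0, 0, fun _ => false, 0⟩

/-- Initial state of `M₂`. -/
def initP2 {m n : ℕ} : PS2 m n := ⟨0, none, 0, 0, fun _ => false, 0⟩

/-- States reachable from `init` by finitely many positive-probability transitions
(the state space of the PRISM model). -/
def Reach {S Act : Type*} (P : S → Act → S → ℝ) (init : S) : S → Prop :=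
  Relation.ReflTransGen (fun s t => ∃ α, 0 < P s α t) init


section Aux

variable {m n : ℕ}

/-- Forget the per-provider counters. -/
def gmap (s : PS1 m n) : PS2 m n := ⟨s.pcc, s.sc, s.ctrc, s.pca, s.att, s.ctra⟩

/-- Inverse of `proj2`. -/
def unproj (v : Fin 3 × Option (Fin m) × Fin (n + 1) × Fin (m + 2) × (Fin m → Bool) × Fin (n + 1)) :
    PS2 m n := ⟨v.1, v.2.1, v.2.2.1, v.2.2.2.1, v.2.2.2.2.1, v.2.2.2.2.2⟩

@[simp] lemma unproj_proj2 (s : PS2 m n) : unproj (proj2 s) = s := rfl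

@[simp] lemma proj2_unproj (v) : proj2 (unproj (m := m) (n := n) v) = v := rfl

@[simp] lemma proj2_gmap (s : PS1 m n) : proj2 (gmap s) = proj1 s := rfl

lemma proj2_inj {s t : PS2 m n} (h : proj2 s = proj2 t) : s = t := by
  have := congrArg unproj h; simpa using this

/-- The unique candidate lift of a target state of `M₂` to `M₁`. -/
def liftT (s : PS1 m n) (α : PAct) (t₂ : PS2 m n) : PS1 m n :=
  ⟨t₂.pcc, t₂.sc, t₂.ctrc,
   (match α with
    | PAct.busy => (match s.sc with
        | some i => Function.update s.sctr i (finInc (s.sctr i))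
        | none => s.sctr)
    | _ => s.sctr),
   t₂.pca, t₂.att, t₂.ctra⟩

@[simp] lemma gmap_liftT (s : PS1 m n) (α : PAct) (t₂ : PS2 m n) : gmap (liftT s α t₂) = t₂ := by
  cases t₂; rfl

lemma liftT_inj {s : PS1 m n} {α : PAct} {t₂ t₂' : PS2 m n}
    (h : liftT s α t₂ = liftT s α t₂') : t₂ = t₂' := by
  have := congrArg gmap h; simpa using this

end Aux

section Aux2

variable {m n : ℕ} {c k₁ : ℕ} {p a : Fin m → ℝ} {x : ℕ → ℝ}

lemma if_nonneg' (C : Prop) [Decidable C] {u : ℝ} (hu : C → 0 ≤ u) :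
    0 ≤ if C then u else 0 := by split_ifs with h; exacts [hu h, le_refl 0]

lemma prov1_nonneg (hp0 : ∀ i, 0 ≤ p i) (ha : ∀ i, 0 ≤ a i ∧ a i ≤ 1)
    (hx : ∀ j, 0 ≤ x j ∧ x j ≤ 1) (s : PS1 m n) (α : PAct) (t : PS1 m n) :
    0 ≤ provPr1 c k₁ p a x s α t := by
  cases α <;> simp only [provPr1]
  · cases s.sc with
    | none => exact le_refl 0
    | some i =>
      exact if_nonneg' _ fun _ => if_nonneg' _ fun _ => zero_le_one
  · refine add_nonneg (add_nonneg ?_ ?_) ?_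
    · cases t.sc with
      | none => exact le_refl 0
      | some i => exact if_nonneg' _ fun _ => hp0 i
    · exact if_nonneg' _ fun _ => zero_le_one
    · exact if_nonneg' _ fun _ => zero_le_one
  · refine add_nonneg ?_ ?_
    · by_cases h : (s.pca : ℕ) < m
      · rw [dif_pos h]
        exact add_nonneg (if_nonneg' _ fun _ => (ha _).1)
          (if_nonneg' _ fun _ => by linarith [(ha ⟨s.pca, h⟩).2])
      · rw [dif_neg h]
    · exact if_nonneg' _ fun _ => add_nonneg (if_nonneg' _ fun _ => (hx _).1)
        (if_nonneg' _ fun _ => by linarith [(hx (s.ctra : ℕ)).2])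

lemma prov2_nonneg (hp0 : ∀ i, 0 ≤ p i) (ha : ∀ i, 0 ≤ a i ∧ a i ≤ 1)
    (hx : ∀ j, 0 ≤ x j ∧ x j ≤ 1) (s : PS2 m n) (α : PAct) (t : PS2 m n) :
    0 ≤ provPr2 k₁ p a x s α t := by
  cases α <;> simp only [provPr2]
  · cases s.sc with
    | none => exact le_refl 0
    | some i =>
      exact if_nonneg' _ fun _ => if_nonneg' _ fun _ => zero_le_one
  · refine add_nonneg ?_ ?_
    · cases t.sc with
      | none => exact le_refl 0
      | some i => exact if_nonneg' _ fun _ => hp0 i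
    · exact if_nonneg' _ fun _ => zero_le_one
  · refine add_nonneg ?_ ?_
    · by_cases h : (s.pca : ℕ) < m
      · rw [dif_pos h]
        exact add_nonneg (if_nonneg' _ fun _ => (ha _).1)
          (if_nonneg' _ fun _ => by linarith [(ha ⟨s.pca, h⟩).2])
      · rw [dif_neg h]
    · exact if_nonneg' _ fun _ => add_nonneg (if_nonneg' _ fun _ => (hx _).1)
        (if_nonneg' _ fun _ => by linarith [(hx (s.ctra : ℕ)).2])

end Aux2

section Aux3

variable {m n : ℕ} {c k₁ : ℕ} {p a : Fin m → ℝ} {x : ℕ → ℝ}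

lemma liftT_eq_iff {s t : PS1 m n} {α : PAct} :
    t = liftT s α (gmap t) ↔ t.sctr = (liftT s α (gmap t)).sctr := by
  constructor
  · intro h; rw [← h]
  · intro h
    cases t
    simp only [liftT, gmap, PS1.mk.injEq]
    simpa [liftT] using h

lemma det1 (s t : PS1 m n) (α : PAct) (h : provPr1 c k₁ p a x s α t ≠ 0) :
    t = liftT s α (gmap t) := by
  rw [liftT_eq_iff]
  cases α <;> simp only [provPr1] at h
  · -- busy
    cases hsc : s.sc with
    | none => rw [hsc] at h; exact absurd rfl h
    | some i =>
      rw [hsc] at h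
      simp only at h
      split_ifs at h with h1 h2
      · rw [h2]; simp only [liftT, busyT1, hsc]
      · exact absurd rfl h
      · exact absurd rfl h
  · -- ctau : in all branches t.sctr = s.sctr
    have goal_eq : (liftT s PAct.ctau (gmap t)).sctr = s.sctr := rfl
    rw [goal_eq]
    by_contra hne
    apply h
    have z1 : (match t.sc with
        | some i =>
            if s.pcc = 0 ∧ (s.ctrc : ℕ) < n ∧ t = { s with pcc := 1, sc := some i } then
              p i
            else 0
        | none => (0:ℝ)) = 0 := by
      cases t.sc with
      | none => rfl
      | some i =>
        simp only
        rw [if_neg]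
        rintro ⟨-, -, rfl⟩
        exact hne rfl
    have z2 : (if (∃ i, s.sc = some i ∧ c ≤ (s.sctr i : ℕ)) ∧ s.pcc = 1 ∧
            t = { s with pcc := 0, sc := none } then (1:ℝ) else 0) = 0 := by
      rw [if_neg]; rintro ⟨-, -, rfl⟩; exact hne rfl
    have z3 : (if s.pcc = 0 ∧ (s.ctrc : ℕ) = n ∧ t = { s with pcc := 2 } then (1:ℝ) else 0) = 0 := by
      rw [if_neg]; rintro ⟨-, -, rfl⟩; exact hne rfl
    rw [z1, z2, z3]; ring
  · -- atau
    have goal_eq : (liftT s PAct.atau (gmap t)).sctr = s.sctr := rfl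
    rw [goal_eq]
    by_contra hne
    apply h
    have z1 : (if h : (s.pca : ℕ) < m then
        (if t = { s with pca := pcaInc s.pca, att := Function.update s.att ⟨s.pca, h⟩ true }
         then a ⟨s.pca, h⟩ else 0)
        + (if t = { s with pca := pcaInc s.pca } then 1 - a ⟨s.pca, h⟩ else 0)
       else 0) = 0 := by
      split_ifs with h1 h2 h3 h3
      · exact absurd (congrArg PS1.sctr h2) hne
      · exact absurd (congrArg PS1.sctr h2) hne
      · exact absurd (congrArg PS1.sctr h3) hne
      · ring
      · rfl
    have z2 : (if (s.pca : ℕ) = m ∧ k₁ ≤ (s.ctra : ℕ) then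
          (if t = { s with pca := Fin.last (m + 1) } then x (s.ctra : ℕ) else 0)
          + (if t = s then 1 - x (s.ctra : ℕ) else 0)
         else 0) = 0 := by
      split_ifs with h1 h2 h3 h3
      · exact absurd (congrArg PS1.sctr h2) hne
      · exact absurd (congrArg PS1.sctr h2) hne
      · exact absurd (congrArg PS1.sctr h3) hne
      · ring
      · rfl
    rw [z1, z2]; ring

end Aux3

section Aux4

variable {m n : ℕ} {c k₁ : ℕ} {p a : Fin m → ℝ} {x : ℕ → ℝ}

/-- Invariant of the reachable states of `M₁`: every per-provider counter is at most the
global counter, and while the client waits to send (`pc_c = 1`) the global counter is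
still below `n`. -/
def PInv (n : ℕ) (s : PS1 m n) : Prop :=
  (∀ i, (s.sctr i : ℕ) ≤ (s.ctrc : ℕ)) ∧ (s.pcc = 1 → (s.ctrc : ℕ) < n)

lemma inv_init : PInv n (initP1 (m := m)) := by
  constructor
  · intro i; simp [initP1]
  · intro h; simp [initP1] at h

lemma add_ne_zero₃ {u v w : ℝ} (h : u + v + w ≠ 0) : u ≠ 0 ∨ v ≠ 0 ∨ w ≠ 0 := by
  by_contra hc; push_neg at hc; obtain ⟨h1, h2, h3⟩ := hc; rw [h1, h2, h3] at h; exact h (by ring)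

lemma inv_step {s t : PS1 m n} (hs : PInv n s) (α : PAct)
    (h : provPr1 c k₁ p a x s α t ≠ 0) : PInv n t := by
  obtain ⟨h1, h2⟩ := hs
  cases α <;> simp only [provPr1] at h
  · -- busy
    cases hsc : s.sc with
    | none => rw [hsc] at h; exact absurd rfl h
    | some i =>
      rw [hsc] at h; simp only at h
      split_ifs at h with hc ht
      · subst ht
        obtain ⟨hpcc, -, -⟩ := hc
        have hlt : (s.ctrc : ℕ) < n := h2 hpcc
        constructor
        · intro j
          have hj := h1 j
          have ec : ((busyT1 s i).ctrc : ℕ) = min ((s.ctrc : ℕ) + 1) n := rfl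
          by_cases hji : j = i
          · subst hji
            have es : ((busyT1 s j).sctr j : ℕ) = min ((s.sctr j : ℕ) + 1) n := by
              simp only [busyT1, Function.update_self]; rfl
            rw [es, ec]; omega
          · have es : ((busyT1 s i).sctr j : ℕ) = (s.sctr j : ℕ) := by
              simp only [busyT1, Function.update_of_ne hji]
            rw [es, ec]; omega
        · intro hp
          have h0 : (busyT1 s i).pcc = 0 := rfl
          rw [h0] at hp
          exact absurd hp (by decide)
      · exact absurd rfl h
      · exact absurd rfl h
  · -- ctau
    rcases add_ne_zero₃ h with hb | hb | hb
    · cases hsc : t.sc with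
      | none => rw [hsc] at hb; exact absurd rfl hb
      | some i =>
        rw [hsc] at hb; simp only at hb
        split_ifs at hb with hc
        · obtain ⟨-, hlt, ht⟩ := hc
          subst ht
          exact ⟨h1, fun _ => hlt⟩
        · exact absurd rfl hb
    · split_ifs at hb with hc
      · obtain ⟨-, -, ht⟩ := hc
        subst ht
        exact ⟨h1, by simp⟩
      · exact absurd rfl hb
    · split_ifs at hb with hc
      · obtain ⟨-, -, ht⟩ := hc
        subst ht
        exact ⟨h1, by simp⟩
      · exact absurd rfl hb
  · -- atau : sctr, ctrc, pcc all unchanged in every branch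
    have key : t.sctr = s.sctr ∧ t.ctrc = s.ctrc ∧ t.pcc = s.pcc := by
      by_contra hne
      apply h
      have z1 : (if h : (s.pca : ℕ) < m then
          (if t = { s with pca := pcaInc s.pca, att := Function.update s.att ⟨s.pca, h⟩ true }
           then a ⟨s.pca, h⟩ else 0)
          + (if t = { s with pca := pcaInc s.pca } then 1 - a ⟨s.pca, h⟩ else 0)
         else 0) = 0 := by
        split_ifs with u1 u2 u3 u3
        · exact absurd (by rw [u2]; exact ⟨rfl, rfl, rfl⟩) hne
        · exact absurd (by rw [u2]; exact ⟨rfl, rfl, rfl⟩) hne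
        · exact absurd (by rw [u3]; exact ⟨rfl, rfl, rfl⟩) hne
        · ring
        · rfl
      have z2 : (if (s.pca : ℕ) = m ∧ k₁ ≤ (s.ctra : ℕ) then
            (if t = { s with pca := Fin.last (m + 1) } then x (s.ctra : ℕ) else 0)
            + (if t = s then 1 - x (s.ctra : ℕ) else 0)
           else 0) = 0 := by
        split_ifs with u1 u2 u3 u3
        · exact absurd (by rw [u2]; exact ⟨rfl, rfl, rfl⟩) hne
        · exact absurd (by rw [u2]; exact ⟨rfl, rfl, rfl⟩) hne
        · exact absurd (by rw [u3]; exact ⟨rfl, rfl, rfl⟩) hne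
        · ring
        · rfl
      rw [z1, z2]; ring
    obtain ⟨k1, k2, k3⟩ := key
    exact ⟨by rw [k1, k2]; exact h1, by rw [k2, k3]; exact h2⟩

lemma inv_reach {s : PS1 m n} (h : Reach (provPr1 c k₁ p a x) initP1 s) : PInv n s := by
  induction h with
  | refl => exact inv_init
  | tail _ hstep ih =>
    obtain ⟨α, hα⟩ := hstep
    exact inv_step ih α (ne_of_gt hα)

end Aux4

section Aux5

variable {m n : ℕ} {c k₁ : ℕ} {p a : Fin m → ℝ} {x : ℕ → ℝ}

lemma lift_cond_iff (s : PS1 m n) (α : PAct) (t₂ T2 : PS2 m n) (T1 : PS1 m n)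
    (key : T1 = liftT s α T2) : (liftT s α t₂ = T1) ↔ (t₂ = T2) := by
  subst key
  exact ⟨fun h => liftT_inj h, fun h => by rw [h]⟩

lemma transfer (hcap : n ≤ c) (s : PS1 m n) (hs : PInv n s) (α : PAct) (t₂ : PS2 m n) :
    provPr1 c k₁ p a x s α (liftT s α t₂) = provPr2 k₁ p a x (gmap s) α t₂ := by
  obtain ⟨hs1, hs2⟩ := hs
  obtain ⟨pcc, sc, ctrc, sctr, pca, att, ctra⟩ := s
  simp only [PInv] at hs1 hs2
  cases α
  case busy =>
    cases sc with
    | none => rfl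
    | some i =>
      simp only [provPr1, provPr2, gmap]
      have hG : (pcc = 1 ∧ ((sctr i : ℕ) < c) ∧ (pca : ℕ) = m) ↔
          (pcc = 1 ∧ (pca : ℕ) = m) := by
        constructor
        · rintro ⟨u1, u2, u3⟩; exact ⟨u1, u3⟩
        · rintro ⟨u1, u3⟩
          refine ⟨u1, ?_, u3⟩
          have h2 := hs2 u1
          have h1 := hs1 i
          omega
      have hE := lift_cond_iff (⟨pcc, some i, ctrc, sctr, pca, att, ctra⟩ : PS1 m n)
        PAct.busy t₂ (busyT2 (gmap ⟨pcc, some i, ctrc, sctr, pca, att, ctra⟩) i)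
        (busyT1 ⟨pcc, some i, ctrc, sctr, pca, att, ctra⟩ i) rfl
      rw [if_congr hG (if_congr hE rfl rfl) rfl]
      rfl
  case ctau =>
    obtain ⟨qcc, qsc, qctrc, qpca, qatt, qctra⟩ := t₂
    simp only [provPr1, provPr2, gmap, liftT]
    simp only [(show ¬ ((∃ i, sc = some i ∧ c ≤ (sctr i : ℕ)) ∧ pcc = 1 ∧
        ({ pcc := qcc, sc := qsc, ctrc := qctrc, sctr := sctr, pca := qpca, att := qatt,
           ctra := qctra } : PS1 m n) =
          { pcc := 0, sc := none, ctrc := ctrc, sctr := sctr, pca := pca, att := att,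
            ctra := ctra }) by
      rintro ⟨⟨i, hi, hci⟩, hpcc, -⟩
      have h2 := hs2 hpcc
      have h1 := hs1 i
      omega), if_false, add_zero]
    simp only [PS1.mk.injEq, PS2.mk.injEq, eq_self_iff_true, and_true, true_and]
  case atau =>
    obtain ⟨qcc, qsc, qctrc, qpca, qatt, qctra⟩ := t₂
    simp only [provPr1, provPr2, gmap, liftT, PS1.mk.injEq, PS2.mk.injEq,
      eq_self_iff_true, and_true, true_and]

end Aux5

section Aux6

variable {m n : ℕ} {c k₁ : ℕ} {p a : Fin m → ℝ} {x : ℕ → ℝ}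

lemma tsum_zero_of {β : Type*} (f : β → ℝ) (h : ∀ b, f b = 0) : ∑' b, f b = 0 := by
  rw [show f = (fun _ => 0) from funext h]
  exact tsum_zero

lemma tsum_ind {β : Type*} (Q : β → Prop) (w : β) (f : β → ℝ)
    (hw : ∀ b, f b ≠ 0 → b = w) :
    ∑' b : {b // Q b}, f b.1 = if Q w then f w else 0 := by
  split_ifs with h
  · refine tsum_eq_single (⟨w, h⟩ : {b // Q b}) ?_
    intro b hb
    by_contra hf
    exact hb (Subtype.ext (hw b.1 hf))
  · refine tsum_zero_of _ ?_
    intro b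
    by_contra hf
    exact h ((hw b.1 hf) ▸ b.2)

lemma classSum (hcap : n ≤ c)
    (hp0 : ∀ i, 0 ≤ p i) (ha : ∀ i, 0 ≤ a i ∧ a i ≤ 1) (hx : ∀ j, 0 ≤ x j ∧ x j ≤ 1)
    (u : {s : PS1 m n // Reach (provPr1 c k₁ p a x) initP1 s}
       ⊕ {s : PS2 m n // Reach (provPr2 k₁ p a x) initP2 s})
    (α : PAct)
    (v : Fin 3 × Option (Fin m) × Fin (n + 1) × Fin (m + 2) × (Fin m → Bool) × Fin (n + 1)) :
    prSet
      (unionPr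
        (fun s (α : PAct) t => provPr1 c k₁ p a x s.1 α t.1)
        (fun s (α : PAct) t => provPr2 k₁ p a x s.1 α t.1))
      u α {w | v = projU (Sum.map Subtype.val Subtype.val w)}
    = provPr2 k₁ p a x (unproj (projU (Sum.map Subtype.val Subtype.val u))) α (unproj v) := by
  cases u with
  | inl s₁' =>
    obtain ⟨s₁, hr⟩ := s₁'
    have hInv := inv_reach hr
    have htr := transfer (c := c) (k₁ := k₁) (p := p) (a := a) (x := x) hcap s₁ hInv α (unproj v)
    show _ = provPr2 k₁ p a x (gmap s₁) α (unproj v)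
    rw [← htr]
    by_cases hz : provPr1 c k₁ p a x s₁ α (liftT s₁ α (unproj v)) = 0
    · rw [hz, prSet]
      refine tsum_zero_of _ ?_
      rintro ⟨⟨t₁, htr1⟩ | t₂', hw⟩
      · show provPr1 c k₁ p a x s₁ α t₁ = 0
        by_contra hf
        have hget : gmap t₁ = unproj v :=
          ((congrArg unproj hw).trans (unproj_proj2 (gmap t₁))).symm
        have heq : t₁ = liftT s₁ α (unproj v) := by
          have hd := det1 s₁ t₁ α hf
          rw [hget] at hd
          exact hd
        rw [heq] at hf
        exact hf hz
      · rfl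
    · have hpos : 0 < provPr1 c k₁ p a x s₁ α (liftT s₁ α (unproj v)) :=
        lt_of_le_of_ne (prov1_nonneg hp0 ha hx s₁ α _) (Ne.symm hz)
      have hL : Reach (provPr1 c k₁ p a x) initP1 (liftT s₁ α (unproj v)) :=
        Relation.ReflTransGen.tail hr ⟨α, hpos⟩
      have hwmem : v = projU (Sum.map Subtype.val Subtype.val
          (Sum.inl (β := {s : PS2 m n // Reach (provPr2 k₁ p a x) initP2 s})
            ⟨liftT s₁ α (unproj v), hL⟩)) := rfl
      rw [prSet]
      rw [tsum_eq_single (⟨Sum.inl ⟨liftT s₁ α (unproj v), hL⟩, hwmem⟩ :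
          {w // w ∈ {w | v = projU (Sum.map Subtype.val Subtype.val w)}})]
      · rfl
      · rintro ⟨⟨t₁, htr1⟩ | t₂', hw⟩ hne
        · show provPr1 c k₁ p a x s₁ α t₁ = 0
          by_contra hf
          have hget : gmap t₁ = unproj v :=
            ((congrArg unproj hw).trans (unproj_proj2 (gmap t₁))).symm
          have heq : t₁ = liftT s₁ α (unproj v) := by
            have hd := det1 s₁ t₁ α hf
            rw [hget] at hd
            exact hd
          apply hne
          apply Subtype.ext
          show Sum.inl _ = Sum.inl _
          exact congrArg Sum.inl (Subtype.ext heq)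
        · rfl
  | inr s₂' =>
    obtain ⟨s₂, hr⟩ := s₂'
    show _ = provPr2 k₁ p a x s₂ α (unproj v)
    by_cases hz : provPr2 k₁ p a x s₂ α (unproj v) = 0
    · rw [hz, prSet]
      refine tsum_zero_of _ ?_
      rintro ⟨⟨t₁', ht⟩ | ⟨t₂, htr2⟩, hw⟩
      · rfl
      · show provPr2 k₁ p a x s₂ α t₂ = 0
        have heq : t₂ = unproj v :=
          ((congrArg unproj hw).trans (unproj_proj2 t₂)).symm
        rw [heq]
        exact hz
    · have hpos : 0 < provPr2 k₁ p a x s₂ α (unproj v) :=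
        lt_of_le_of_ne (prov2_nonneg hp0 ha hx s₂ α _) (Ne.symm hz)
      have hL : Reach (provPr2 k₁ p a x) initP2 (unproj v) :=
        Relation.ReflTransGen.tail hr ⟨α, hpos⟩
      have hwmem : v = projU (Sum.map Subtype.val Subtype.val
          (Sum.inr (α := {s : PS1 m n // Reach (provPr1 c k₁ p a x) initP1 s})
            ⟨unproj v, hL⟩)) := rfl
      rw [prSet]
      rw [tsum_eq_single (⟨Sum.inr ⟨unproj v, hL⟩, hwmem⟩ :
          {w // w ∈ {w | v = projU (Sum.map Subtype.val Subtype.val w)}})]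
      · rfl
      · rintro ⟨⟨t₁', ht⟩ | ⟨t₂, htr2⟩, hw⟩ hne
        · rfl
        · show provPr2 k₁ p a x s₂ α t₂ = 0
          by_contra hf
          have heq : t₂ = unproj v :=
            ((congrArg unproj hw).trans (unproj_proj2 t₂)).symm
          apply hne
          apply Subtype.ext
          exact congrArg Sum.inr (Subtype.ext heq)

end Aux6

/-- Variable abstraction for the provider attacker: if `c ≥ n` then
`M₁ = Client ∥ ProviderAtt` and `M₂ = Client' ∥ ProviderAtt` (restricted to their reachable
state spaces) are bisimilar, provided the labelings are invariant w.r.t. the set `V` of all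
variables except the counters `ctr_c^i`; indeed the relation `R(s,s') ↔ s ≡_V s'` is a
probabilistic bisimulation witnessing this. -/
theorem stmt6 (m n c k₁ : ℕ) (hcap : n ≤ c) (hk₁ : k₁ ≤ n)
    (p : Fin m → ℝ) (hp0 : ∀ i, 0 ≤ p i) (hp1 : ∑ i, p i = 1)
    (a : Fin m → ℝ) (ha : ∀ i, 0 ≤ a i ∧ a i ≤ 1)
    (x : ℕ → ℝ) (hx : ∀ j, 0 ≤ x j ∧ x j ≤ 1)
    {AP : Type*} (L₁ : PS1 m n → Set AP) (L₂ : PS2 m n → Set AP)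
    (hL₁ : ∀ s s', proj1 s = proj1 s' → L₁ s = L₁ s')
    (hL₂ : ∀ s s', proj2 s = proj2 s' → L₂ s = L₂ s')
    (hL₁₂ : ∀ (s : PS1 m n) (s' : PS2 m n), proj1 s = proj2 s' → L₁ s = L₂ s') :
    IsProbBisim
      (unionPr
        (fun (s : {s : PS1 m n // Reach (provPr1 c k₁ p a x) initP1 s}) (α : PAct)
             (t : {s : PS1 m n // Reach (provPr1 c k₁ p a x) initP1 s}) =>
          provPr1 c k₁ p a x s.1 α t.1)
        (fun (s : {s : PS2 m n // Reach (provPr2 k₁ p a x) initP2 s}) (α : PAct)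
             (t : {s : PS2 m n // Reach (provPr2 k₁ p a x) initP2 s}) =>
          provPr2 k₁ p a x s.1 α t.1))
      (unionL (fun s => L₁ s.1) (fun s => L₂ s.1))
      (fun u v => projU (Sum.map Subtype.val Subtype.val u)
                = projU (Sum.map Subtype.val Subtype.val v))
    ∧
    Bisimilar
      (fun (s : {s : PS1 m n // Reach (provPr1 c k₁ p a x) initP1 s}) (α : PAct)
           (t : {s : PS1 m n // Reach (provPr1 c k₁ p a x) initP1 s}) =>
        provPr1 c k₁ p a x s.1 α t.1)
      (fun s => if s.1 = initP1 then (1 : ℝ) else 0)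
      (fun s => L₁ s.1)
      (fun (s : {s : PS2 m n // Reach (provPr2 k₁ p a x) initP2 s}) (α : PAct)
           (t : {s : PS2 m n // Reach (provPr2 k₁ p a x) initP2 s}) =>
        provPr2 k₁ p a x s.1 α t.1)
      (fun s => if s.1 = initP2 then (1 : ℝ) else 0)
      (fun s => L₂ s.1) := by
  have hbis : IsProbBisim
      (unionPr
        (fun (s : {s : PS1 m n // Reach (provPr1 c k₁ p a x) initP1 s}) (α : PAct)
             (t : {s : PS1 m n // Reach (provPr1 c k₁ p a x) initP1 s}) =>
          provPr1 c k₁ p a x s.1 α t.1)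
        (fun (s : {s : PS2 m n // Reach (provPr2 k₁ p a x) initP2 s}) (α : PAct)
             (t : {s : PS2 m n // Reach (provPr2 k₁ p a x) initP2 s}) =>
          provPr2 k₁ p a x s.1 α t.1))
      (unionL (fun s => L₁ s.1) (fun s => L₂ s.1))
      (fun u v => projU (Sum.map Subtype.val Subtype.val u)
                = projU (Sum.map Subtype.val Subtype.val v)) := by
    refine ⟨⟨fun _ => rfl, fun h => h.symm, fun h1 h2 => h1.trans h2⟩, ?_, ?_⟩
    · rintro (s1 | s2) (s1' | s2') h
      · exact hL₁ _ _ h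
      · exact hL₁₂ _ _ h
      · exact (hL₁₂ _ _ h.symm).symm
      · exact hL₂ _ _ h
    · intro s s' hss' α t
      have e1 := classSum hcap hp0 ha hx s α (projU (Sum.map Subtype.val Subtype.val t))
      have e2 := classSum hcap hp0 ha hx s' α (projU (Sum.map Subtype.val Subtype.val t))
      have e3 : provPr2 k₁ p a x (unproj (projU (Sum.map Subtype.val Subtype.val s))) α
            (unproj (projU (Sum.map Subtype.val Subtype.val t)))
          = provPr2 k₁ p a x (unproj (projU (Sum.map Subtype.val Subtype.val s'))) α
            (unproj (projU (Sum.map Subtype.val Subtype.val t))) := by rw [hss']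
      exact (e1.trans e3).trans e2.symm
  refine ⟨hbis, ⟨_, hbis, ?_⟩⟩
  intro t
  have h1 := tsum_ind
    (Q := fun s : {s : PS1 m n // Reach (provPr1 c k₁ p a x) initP1 s} =>
      projU (Sum.map Subtype.val Subtype.val
        (Sum.inl (β := {s : PS2 m n // Reach (provPr2 k₁ p a x) initP2 s}) s))
      = projU (Sum.map Subtype.val Subtype.val t))
    (⟨initP1, Relation.ReflTransGen.refl⟩ : {s : PS1 m n // Reach (provPr1 c k₁ p a x) initP1 s})
    (fun s => if s.1 = initP1 then (1 : ℝ) else 0)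
    (by
      intro b hb
      have hbi : b.1 = initP1 := by
        by_contra hc
        exact hb (if_neg hc)
      exact Subtype.ext hbi)
  have h2 := tsum_ind
    (Q := fun s : {s : PS2 m n // Reach (provPr2 k₁ p a x) initP2 s} =>
      projU (Sum.map Subtype.val Subtype.val
        (Sum.inr (α := {s : PS1 m n // Reach (provPr1 c k₁ p a x) initP1 s}) s))
      = projU (Sum.map Subtype.val Subtype.val t))
    (⟨initP2, Relation.ReflTransGen.refl⟩ : {s : PS2 m n // Reach (provPr2 k₁ p a x) initP2 s})
    (fun s => if s.1 = initP2 then (1 : ℝ) else 0)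
    (by
      intro b hb
      have hbi : b.1 = initP2 := by
        by_contra hc
        exact hb (if_neg hc)
      exact Subtype.ext hbi)
  rw [h1, h2]
  simp only [eq_self_iff_true, if_true]
  exact if_congr Iff.rfl rfl rfl
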